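/- Let H be a finite set with |H| = N, let (X_t)_{t≥1} be i.i.d. uniform draws from H, let c ∈ H, and let A₁, …, A_r ⊆ H be nonempty subsets that are pairwise disjoint and all disjoint from {c}. Let T = min(τ_c, min_{1≤i≤r} σ_{A_i}) and let β₂ = P(τ_c < min_{1≤i≤r} σ_{A_i}) be the probability that the process stops because c appears (rather than because some A_i is completed). Then E[T] = β₂ · N. (That is, if one of the alignment sets in a first-to-complete scheme has size 2, then d^I = β₂^I · |H|.) -/

import Mathlib

open MeasureTheory ProbabilityTheory

/-- The collection time `σ_A`: the smallest time `t ≥ 1` such that every element of `A`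
has appeared among `X_1, …, X_t` (with the convention `sInf ∅ = 0`). -/
noncomputable def collectTime {Ω H : Type*} (X : ℕ → Ω → H) (A : Set H) (ω : Ω) : ℕ :=
  sInf {t : ℕ | ∀ a ∈ A, ∃ s, 1 ≤ s ∧ s ≤ t ∧ X s ω = a}

/-- The first hitting time `τ_c`: the first time `t ≥ 1` with `X_t = c`. -/
noncomputable def hitTime {Ω H : Type*} (X : ℕ → Ω → H) (c : H) (ω : Ω) : ℕ :=
  collectTime X {c} ω

section Aux
variable {Ω H : Type*}

/-- auxiliary: the "collection complete by time `t`" predicate. -/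
def colProp (X : ℕ → Ω → H) (A : Set H) (ω : Ω) (t : ℕ) : Prop :=
  ∀ a ∈ A, ∃ s, 1 ≤ s ∧ s ≤ t ∧ X s ω = a

lemma colProp_mono {X : ℕ → Ω → H} {A : Set H} {ω : Ω} {t u : ℕ} (h : t ≤ u)
    (hp : colProp X A ω t) : colProp X A ω u := fun a ha => by
  obtain ⟨s, h1, h2, h3⟩ := hp a ha
  exact ⟨s, h1, h2.trans h, h3⟩

lemma collectTime_def (X : ℕ → Ω → H) (A : Set H) (ω : Ω) :
    collectTime X A ω = sInf {t | colProp X A ω t} := rfl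

lemma collectTime_gt_iff {X : ℕ → Ω → H} {A : Set H} {ω : Ω}
    (hne : ∃ u, colProp X A ω u) (t : ℕ) :
    t < collectTime X A ω ↔ ¬ colProp X A ω t := by
  rw [collectTime_def]
  constructor
  · intro h hp
    have := Nat.sInf_le (s := {t | colProp X A ω t}) hp
    omega
  · intro hp
    have hmem : sInf {t | colProp X A ω t} ∈ {t | colProp X A ω t} := Nat.sInf_mem hne
    by_contra h
    push_neg at h
    exact hp (colProp_mono h hmem)

lemma collectTime_eq_succ_iff {X : ℕ → Ω → H} {A : Set H} {ω : Ω} (n : ℕ) :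
    collectTime X A ω = n + 1 ↔ colProp X A ω (n + 1) ∧ ¬ colProp X A ω n := by
  rw [collectTime_def]
  constructor
  · intro h
    have hne : {t | colProp X A ω t}.Nonempty := by
      by_contra hemp
      rw [Set.not_nonempty_iff_eq_empty] at hemp
      rw [hemp] at h; simp [Nat.sInf_empty] at h
    have hmem := Nat.sInf_mem hne
    rw [h] at hmem
    refine ⟨hmem, fun hp => ?_⟩
    have := Nat.sInf_le (s := {t | colProp X A ω t}) hp
    omega
  · rintro ⟨h1, h2⟩
    have hle := Nat.sInf_le (s := {t | colProp X A ω t}) h1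
    have hgt : n < sInf {t | colProp X A ω t} := (collectTime_gt_iff ⟨n+1, h1⟩ n).2 h2
    omega

lemma collectTime_eq_zero_iff {X : ℕ → Ω → H} {A : Set H} {ω : Ω} :
    collectTime X A ω = 0 ↔ colProp X A ω 0 ∨ ∀ u, ¬ colProp X A ω u := by
  rw [collectTime_def, Nat.sInf_eq_zero]
  simp [Set.eq_empty_iff_forall_notMem]

variable [MeasurableSpace Ω] [MeasurableSpace H] [MeasurableSingletonClass H]

lemma measurableSet_colProp {X : ℕ → Ω → H} (hX : ∀ t, Measurable (X t)) {A : Set H}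
    (hA : A.Countable) (t : ℕ) : MeasurableSet {ω | colProp X A ω t} := by
  have h : {ω | colProp X A ω t} = ⋂ a ∈ A, ⋃ s ∈ Set.Icc 1 t, X s ⁻¹' {a} := by
    ext ω
    simp only [colProp, Set.mem_setOf_eq, Set.mem_iInter, Set.mem_iUnion, Set.mem_Icc,
      Set.mem_preimage, Set.mem_singleton_iff]
    constructor
    · intro h a ha; obtain ⟨s, h1, h2, h3⟩ := h a ha; exact ⟨s, ⟨h1, h2⟩, h3⟩
    · intro h a ha; obtain ⟨s, ⟨h1, h2⟩, h3⟩ := h a ha; exact ⟨s, h1, h2, h3⟩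
  rw [h]
  exact MeasurableSet.biInter hA fun a _ => MeasurableSet.biUnion (Set.to_countable _)
    fun s _ => hX s (measurableSet_singleton a)

lemma measurable_collectTime {X : ℕ → Ω → H} (hX : ∀ t, Measurable (X t)) {A : Set H}
    (hA : A.Countable) : Measurable (collectTime X A) := by
  apply measurable_to_countable'
  intro n
  match n with
  | 0 =>
    have h : collectTime X A ⁻¹' {0} =
        {ω | colProp X A ω 0} ∪ ⋂ u, {ω | colProp X A ω u}ᶜ := by
      ext ω
      simp [collectTime_eq_zero_iff]
    rw [h]
    exact (measurableSet_colProp hX hA 0).union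
      (MeasurableSet.iInter fun u => (measurableSet_colProp hX hA u).compl)
  | n + 1 =>
    have h : collectTime X A ⁻¹' {n + 1} =
        {ω | colProp X A ω (n + 1)} ∩ {ω | colProp X A ω n}ᶜ := by
      ext ω
      simp [collectTime_eq_succ_iff]
    rw [h]
    exact (measurableSet_colProp hX hA (n + 1)).inter (measurableSet_colProp hX hA n).compl

lemma lt_iInf_nat_iff {r : ℕ} (hr : 0 < r) (f : Fin r → ℕ) (t : ℕ) :
    t < ⨅ i, f i ↔ ∀ i, t < f i := by
  have : Nonempty (Fin r) := ⟨⟨0, hr⟩⟩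
  constructor
  · intro h i
    exact lt_of_lt_of_le h (ciInf_le (OrderBot.bddBelow _) i)
  · intro h
    have : t + 1 ≤ ⨅ i, f i := le_ciInf fun i => h i
    omega

lemma measurable_iInf_nat {r : ℕ} (hr : 0 < r) {f : Fin r → Ω → ℕ}
    (hf : ∀ i, Measurable (f i)) : Measurable fun ω => ⨅ i, f i ω := by
  have : Nonempty (Fin r) := ⟨⟨0, hr⟩⟩
  apply measurable_to_countable'
  intro n
  have h : (fun ω => ⨅ i, f i ω) ⁻¹' {n} =
      (⋂ i, f i ⁻¹' Set.Ici n) ∩ ⋃ i, f i ⁻¹' {n} := by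
    ext ω
    simp only [Set.mem_preimage, Set.mem_singleton_iff, Set.mem_inter_iff, Set.mem_iInter,
      Set.mem_iUnion, Set.mem_Ici]
    constructor
    · intro h
      constructor
      · intro i; rw [← h]; exact ciInf_le (OrderBot.bddBelow _) i
      · have hmem : (⨅ i, f i ω) ∈ Set.range fun i => f i ω :=
          Nat.sInf_mem (Set.range_nonempty _)
        obtain ⟨i, hi⟩ := hmem
        exact ⟨i, by simpa using hi.trans h⟩
    · rintro ⟨h1, i, hi⟩
      refine le_antisymm ?_ (le_ciInf h1)
      calc ⨅ i, f i ω ≤ f i ω := ciInf_le (OrderBot.bddBelow _) i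
        _ = n := hi
  rw [h]
  exact ((MeasurableSet.iInter fun i => hf i MeasurableSet.of_discrete).inter
    (MeasurableSet.iUnion fun i => hf i MeasurableSet.of_discrete))

end Aux

set_option linter.unusedSectionVars false
section Prob
variable {Ω H : Type*} [MeasurableSpace Ω] (μ : Measure Ω) [IsProbabilityMeasure μ]
  [Fintype H] [MeasurableSpace H] [MeasurableSingletonClass H]
  {N : ℕ} (hN : (N : ENNReal) ≠ 0)
  {X : ℕ → Ω → H} (hmeas : ∀ t, Measurable (X t))
  (hindep : iIndepFun X μ)
  (hunif : ∀ t, ∀ c : H, μ {ω | X t ω = c} = (N : ENNReal)⁻¹)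

include hmeas hindep hunif

lemma prob_avoid_prod (a : H) (t : ℕ) :
    μ (⋂ s ∈ Finset.Icc 1 t, X s ⁻¹' {a}ᶜ) = (1 - (N : ENNReal)⁻¹) ^ t := by
  have h := hindep.meas_biInter (S := Finset.Icc 1 t) (s := fun s => X s ⁻¹' {a}ᶜ)
    (fun i _ => ⟨{a}ᶜ, (measurableSet_singleton a).compl, rfl⟩)
  rw [h]
  have hone : ∀ s, μ (X s ⁻¹' {a}ᶜ) = 1 - (N : ENNReal)⁻¹ := by
    intro s
    have : X s ⁻¹' {a}ᶜ = {ω | X s ω = a}ᶜ := by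
      ext ω; simp
    rw [this, prob_compl_eq_one_sub]
    · rw [hunif s a]
    · exact hmeas s (measurableSet_singleton a)
  rw [Finset.prod_congr rfl fun s _ => hone s, Finset.prod_const, Nat.card_Icc]
  norm_num

include hN in
lemma prob_never (a : H) : μ {ω | ∀ s, 1 ≤ s → X s ω ≠ a} = 0 := by
  have hsub : ∀ t, {ω | ∀ s, 1 ≤ s → X s ω ≠ a} ⊆ ⋂ s ∈ Finset.Icc 1 t, X s ⁻¹' {a}ᶜ := by
    intro t ω hω
    simp only [Set.mem_iInter, Finset.mem_Icc, Set.mem_preimage, Set.mem_compl_iff,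
      Set.mem_singleton_iff]
    exact fun s hs => hω s hs.1
  have hbound : ∀ t, μ {ω | ∀ s, 1 ≤ s → X s ω ≠ a} ≤ (1 - (N : ENNReal)⁻¹) ^ t :=
    fun t => (measure_mono (hsub t)).trans_eq (prob_avoid_prod μ hmeas hindep hunif a t)
  have hq : (1 : ENNReal) - (N : ENNReal)⁻¹ < 1 :=
    ENNReal.sub_lt_self ENNReal.one_ne_top one_ne_zero (by simp [hN])
  have htend : Filter.Tendsto (fun t => (1 - (N : ENNReal)⁻¹) ^ t) Filter.atTop (nhds 0) :=
    ENNReal.tendsto_pow_atTop_nhds_zero_of_lt_one hq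
  have := le_of_tendsto_of_tendsto' (tendsto_const_nhds
    (x := μ {ω | ∀ s, 1 ≤ s → X s ω ≠ a}) (f := Filter.atTop)) htend hbound
  simpa using this

end Prob

set_option linter.unusedSectionVars false
section Prob2
variable {Ω H : Type*} [MeasurableSpace Ω] (μ : Measure Ω) [IsProbabilityMeasure μ]
  [Fintype H] [MeasurableSpace H] [MeasurableSingletonClass H]
  {N : ℕ}
  {X : ℕ → Ω → H} (hmeas : ∀ t, Measurable (X t))
  (hindep : iIndepFun X μ)
  (hunif : ∀ t, ∀ c : H, μ {ω | X t ω = c} = (N : ENNReal)⁻¹)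

include hmeas hindep hunif

lemma indep_coord_event (t : ℕ) (c : H)
    (G : ({x // x ∈ Finset.Icc 1 t} → H) → Prop) :
    μ ({ω | X (t + 1) ω = c} ∩ {ω | G fun s => X s.1 ω}) =
      (N : ENNReal)⁻¹ * μ {ω | G fun s => X s.1 ω} := by
  have hdisj : Disjoint ({t + 1} : Finset ℕ) (Finset.Icc 1 t) := by
    simp [Finset.disjoint_left]
  have h := hindep.indepFun_finset {t + 1} (Finset.Icc 1 t) hdisj hmeas
  have hmem : t + 1 ∈ ({t + 1} : Finset ℕ) := Finset.mem_singleton_self _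
  have key := h.measure_inter_preimage_eq_mul
    (s := {g : {x // x ∈ ({t+1} : Finset ℕ)} → H | g ⟨t + 1, hmem⟩ = c})
    (t := {g : {x // x ∈ Finset.Icc 1 t} → H | G g})
    MeasurableSet.of_discrete MeasurableSet.of_discrete
  have h1 : (fun a (i : {x // x ∈ ({t+1} : Finset ℕ)}) => X i.1 a) ⁻¹'
      {g | g ⟨t + 1, hmem⟩ = c} = {ω | X (t + 1) ω = c} := rfl
  have h2 : (fun a (i : {x // x ∈ Finset.Icc 1 t}) => X i.1 a) ⁻¹'
      {g | G g} = {ω | G fun s => X s.1 ω} := rfl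
  rw [h1, h2] at key
  rw [key, hunif (t + 1) c]

end Prob2

lemma lintegral_nat_eq_tsum {Ω : Type*} [MeasurableSpace Ω] (μ : Measure Ω) {f : Ω → ℕ}
    (hf : Measurable f) :
    ∫⁻ ω, (f ω : ENNReal) ∂μ = ∑' t, μ {ω | t < f ω} := by
  have h : ∀ ω, (f ω : ENNReal) = ∑' t, Set.indicator {ω | t < f ω} (fun _ => 1) ω := by
    intro ω
    rw [tsum_eq_sum (s := Finset.range (f ω))
      (fun t ht => by simp [Set.indicator, Finset.mem_range.not.1 ht])]
    rw [Finset.sum_congr rfl fun t ht => ?_, Finset.sum_const, Finset.card_range, nsmul_eq_mul,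
      mul_one]
    simp [Set.indicator, Finset.mem_range.1 ht]
  calc ∫⁻ ω, (f ω : ENNReal) ∂μ
      = ∫⁻ ω, ∑' t, Set.indicator {ω | t < f ω} (fun _ => 1) ω ∂μ := by
        exact lintegral_congr h
    _ = ∑' t, ∫⁻ ω, Set.indicator {ω | t < f ω} (fun _ => 1) ω ∂μ :=
        lintegral_tsum fun t =>
          ((measurable_const.indicator (hf MeasurableSet.of_discrete))).aemeasurable
    _ = ∑' t, μ {ω | t < f ω} := by
        refine tsum_congr fun t => ?_
        have hms : MeasurableSet {ω | t < f ω} := hf (MeasurableSet.of_discrete (s := {n | t < n}))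
        exact lintegral_indicator_one hms

lemma cast_iInf_nat {r : ℕ} (hr : 0 < r) (f : Fin r → ℕ) :
    ((⨅ i, f i : ℕ) : ℝ) = ⨅ i, (f i : ℝ) := by
  have hne : Nonempty (Fin r) := ⟨⟨0, hr⟩⟩
  obtain ⟨i0, hi0⟩ : ∃ i, f i = ⨅ i, f i := Nat.sInf_mem (Set.range_nonempty fun i => f i)
  refine le_antisymm (le_ciInf fun i => ?_) ?_
  · exact_mod_cast ciInf_le (OrderBot.bddBelow _) i
  · have hbdd : BddBelow (Set.range fun i => (f i : ℝ)) :=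
      ⟨0, by rintro x ⟨i, rfl⟩; exact Nat.cast_nonneg _⟩
    calc (⨅ i, (f i : ℝ)) ≤ (f i0 : ℝ) := ciInf_le hbdd i0
      _ = _ := by rw [hi0]


/-- If one of the alignment sets in a first-to-complete scheme has size 2 (waiting for
the single complement matrix `c`), then the average delay satisfies `d^I = β₂^I · |H|`:
with `T = min(τ_c, min_i σ_{A_i})` and `β₂ = P(τ_c < min_i σ_{A_i})`, one has
`E[T] = β₂ · N`. -/
theorem delay_eq_beta2_mul_card
    {Ω : Type*} [MeasurableSpace Ω] (μ : Measure Ω) [IsProbabilityMeasure μ]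
    {H : Type*} [Fintype H] [MeasurableSpace H] [MeasurableSingletonClass H]
    (N : ℕ) (hcard : Fintype.card H = N)
    (X : ℕ → Ω → H) (hmeas : ∀ t, Measurable (X t))
    (hindep : iIndepFun X μ)
    (hunif : ∀ t, ∀ c : H, μ {ω | X t ω = c} = (N : ENNReal)⁻¹)
    (c : H) (r : ℕ) (hr : 0 < r) (A : Fin r → Finset H)
    (hA : ∀ i, (A i).Nonempty)
    (hdisj : Pairwise fun i j => Disjoint (A i) (A j))
    (hc : ∀ i, c ∉ A i) :
    ∫ ω, (min (hitTime X c ω) (⨅ i, collectTime X (A i : Set H) ω) : ℝ) ∂μ =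
      (μ {ω | hitTime X c ω < ⨅ i, collectTime X (A i : Set H) ω}).toReal * N := by
  classical
  have hN0 : N ≠ 0 := by
    have : 0 < Fintype.card H := @Fintype.card_pos H _ ⟨c⟩
    omega
  have hNenn0 : (N : ENNReal) ≠ 0 := by simp [hN0]
  set G : ℕ → Set Ω := fun t =>
    {ω | colProp X {c} ω t}ᶜ ∩ ⋂ i, {ω | colProp X (A i : Set H) ω t}ᶜ with hG
  set E : Set Ω :=
    {ω | (∃ u, colProp X {c} ω u) ∧ ∀ i, ∃ u, colProp X (A i : Set H) ω u} with hE
  set D : ℕ → Set Ω := fun t => {ω | X (t + 1) ω = c} ∩ G t with hD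
  have hGmem : ∀ t ω, ω ∈ G t ↔
      (¬ colProp X {c} ω t ∧ ∀ i, ¬ colProp X (A i : Set H) ω t) := by
    intro t ω; simp [hG]
  have hGmeas : ∀ t, MeasurableSet (G t) := fun t =>
    ((measurableSet_colProp hmeas (Set.countable_singleton c) t).compl).inter
      (MeasurableSet.iInter fun i =>
        (measurableSet_colProp hmeas ((A i).countable_toSet) t).compl)
  have hTmeas : Measurable fun ω =>
      min (hitTime X c ω) (⨅ i, collectTime X (A i : Set H) ω) :=
    Measurable.min (measurable_collectTime hmeas (Set.countable_singleton c))
      (measurable_iInf_nat hr fun i => measurable_collectTime hmeas ((A i).countable_toSet))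
  -- E is conull
  have hEnull : μ Eᶜ = 0 := by
    have hsub : Eᶜ ⊆ ⋃ a : H, {ω | ∀ s, 1 ≤ s → X s ω ≠ a} := by
      intro ω hω
      by_contra hcon
      simp only [Set.mem_iUnion, Set.mem_setOf_eq] at hcon
      push_neg at hcon
      refine hω ⟨?_, ?_⟩
      · obtain ⟨s, hs1, hs2⟩ := hcon c
        exact ⟨s, fun a ha => by
          rw [Set.mem_singleton_iff] at ha; exact ⟨s, hs1, le_rfl, ha ▸ hs2⟩⟩
      · intro i
        choose f hf1 hf2 using hcon
        exact ⟨(A i).sup f, fun a ha => ⟨f a, hf1 a, Finset.le_sup ha, hf2 a⟩⟩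
    exact measure_mono_null hsub (measure_iUnion_null fun a =>
      prob_never μ hNenn0 hmeas hindep hunif a)
  have hgt_c : ∀ ω ∈ E, ∀ t, (t < hitTime X c ω ↔ ¬ colProp X {c} ω t) :=
    fun ω hω t => collectTime_gt_iff hω.1 t
  have hgt_A : ∀ ω ∈ E, ∀ i t,
      (t < collectTime X (A i : Set H) ω ↔ ¬ colProp X (A i : Set H) ω t) :=
    fun ω hω i t => collectTime_gt_iff (hω.2 i) t
  have hgt_inf : ∀ ω ∈ E, ∀ t,
      (t < ⨅ i, collectTime X (A i : Set H) ω ↔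
        ∀ i, ¬ colProp X (A i : Set H) ω t) := by
    intro ω hω t
    rw [lt_iInf_nat_iff hr]
    exact forall_congr' fun i => hgt_A ω hω i t
  have hT_iff : ∀ ω ∈ E, ∀ t,
      (t < min (hitTime X c ω) (⨅ i, collectTime X (A i : Set H) ω) ↔ ω ∈ G t) := by
    intro ω hω t
    rw [lt_min_iff, hgt_c ω hω t, hgt_inf ω hω t]
    exact (hGmem t ω).symm
  have hconull : ∀ s : Set Ω, μ s = μ (s ∩ E) := by
    intro s
    refine le_antisymm ?_ (measure_mono Set.inter_subset_left)
    calc μ s ≤ μ ((s ∩ E) ∪ Eᶜ) := measure_mono fun ω hω => by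
          by_cases h : ω ∈ E
          · exact Or.inl ⟨hω, h⟩
          · exact Or.inr h
      _ ≤ μ (s ∩ E) + μ Eᶜ := measure_union_le _ _
      _ = μ (s ∩ E) := by rw [hEnull, add_zero]
  have hμT : ∀ t, μ {ω | t <
      min (hitTime X c ω) (⨅ i, collectTime X (A i : Set H) ω)} = μ (G t) := by
    intro t
    rw [hconull {ω | t < min (hitTime X c ω) (⨅ i, collectTime X (A i : Set H) ω)},
      hconull (G t)]
    congr 1
    ext ω
    simp only [Set.mem_inter_iff, Set.mem_setOf_eq]
    exact and_congr_left fun hω => hT_iff ω hω t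
  have hlayer : ∫⁻ ω,
      ((min (hitTime X c ω) (⨅ i, collectTime X (A i : Set H) ω) : ℕ) : ENNReal) ∂μ
      = ∑' t, μ (G t) := by
    rw [lintegral_nat_eq_tsum μ hTmeas]
    exact tsum_congr hμT
  have hDmeas : ∀ t, MeasurableSet (D t) := fun t =>
    (hmeas (t + 1) (measurableSet_singleton c)).inter (hGmeas t)
  have hDdisj : Pairwise (Function.onFun Disjoint D) := by
    have key : ∀ t u, t < u → ∀ ω, ω ∈ D t → ω ∉ D u := by
      intro t u htu ω ht hu
      have htc : X (t + 1) ω = c := ht.1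
      have hGu := (hGmem u ω).1 hu.2
      exact hGu.1 fun a ha => by
        rw [Set.mem_singleton_iff] at ha
        exact ⟨t + 1, by omega, by omega, ha ▸ htc⟩
    intro t u htu
    rcases lt_or_gt_of_ne htu with h | h
    · exact Set.disjoint_left.2 fun ω hω hω' => key t u h ω hω hω'
    · exact Set.disjoint_right.2 fun ω hω hω' => key u t h ω hω hω'
  have hDevent :
      {ω | hitTime X c ω < ⨅ i, collectTime X (A i : Set H) ω} ∩ E
        = (⋃ t, D t) ∩ E := by
    ext ω
    simp only [Set.mem_inter_iff, Set.mem_setOf_eq, Set.mem_iUnion]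
    refine and_congr_left fun hω => ?_
    constructor
    · intro hlt
      have h0 : 0 < hitTime X c ω := by
        rw [hgt_c ω hω 0]
        intro hp
        obtain ⟨s, h1, h2, -⟩ := hp c rfl
        omega
      obtain ⟨t, hτ⟩ : ∃ t, hitTime X c ω = t + 1 := ⟨hitTime X c ω - 1, by omega⟩
      have hsucc := (collectTime_eq_succ_iff (X := X) (A := ({c} : Set H)) (ω := ω) t).1 hτ
      refine ⟨t, ?_, ?_⟩
      · obtain ⟨s, hs1, hs2, hs3⟩ := hsucc.1 c rfl
        have hst : s = t + 1 := by
          by_contra hne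
          exact hsucc.2 fun a ha => by
            rw [Set.mem_singleton_iff] at ha
            exact ⟨s, hs1, by omega, ha ▸ hs3⟩
        exact hst ▸ hs3
      · rw [hGmem]
        refine ⟨hsucc.2, fun i => ?_⟩
        refine (hgt_A ω hω i t).1 ?_
        have h2 : hitTime X c ω ≤ collectTime X (A i : Set H) ω :=
          le_of_lt (lt_of_lt_of_le hlt (ciInf_le (OrderBot.bddBelow _) i))
        omega
    · rintro ⟨t, htc, hGt⟩
      rw [hGmem] at hGt
      have hτ : hitTime X c ω = t + 1 := by
        refine (collectTime_eq_succ_iff (X := X) (A := ({c} : Set H)) (ω := ω) t).2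
          ⟨fun a ha => ?_, hGt.1⟩
        rw [Set.mem_singleton_iff] at ha
        exact ⟨t + 1, by omega, le_rfl, ha ▸ htc⟩
      have hσ : t + 1 < ⨅ i, collectTime X (A i : Set H) ω := by
        rw [hgt_inf ω hω (t + 1)]
        intro i hp
        have hni := hGt.2 i
        simp only [colProp] at hni
        push_neg at hni
        obtain ⟨a, ha, hnos⟩ := hni
        obtain ⟨s, hs1, hs2, hs3⟩ := hp a ha
        rcases Nat.lt_or_ge s (t + 1) with h | h
        · exact hnos s hs1 (by omega) hs3
        · have hst : s = t + 1 := by omega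
          rw [hst] at hs3
          have htc' : X (t + 1) ω = c := htc
          have hac : a = c := hs3.symm.trans htc'
          rw [hac] at ha
          exact hc i (Finset.mem_coe.1 ha)
      omega
  have hDprob : ∀ t, μ (D t) = (N : ENNReal)⁻¹ * μ (G t) := by
    intro t
    have hrep : ∀ B : Set H, ∀ ω, colProp X B ω t ↔
        (∀ a ∈ B, ∃ s : {x // x ∈ Finset.Icc 1 t}, X s.1 ω = a) := by
      intro B ω
      constructor
      · intro h a ha
        obtain ⟨s, h1, h2, h3⟩ := h a ha
        exact ⟨⟨s, Finset.mem_Icc.2 ⟨h1, h2⟩⟩, h3⟩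
      · intro h a ha
        obtain ⟨⟨s, hs⟩, h3⟩ := h a ha
        obtain ⟨h1, h2⟩ := Finset.mem_Icc.1 hs
        exact ⟨s, h1, h2, h3⟩
    have hGrep : G t = {ω | (fun g : {x // x ∈ Finset.Icc 1 t} → H =>
        (¬ ∀ a ∈ ({c} : Set H), ∃ s, g s = a) ∧
          ∀ i, ¬ ∀ a ∈ (A i : Set H), ∃ s, g s = a) (fun s => X s.1 ω)} := by
      ext ω
      rw [hGmem]
      simp only [Set.mem_setOf_eq]
      constructor
      · rintro ⟨h1, h2⟩
        exact ⟨fun h => h1 ((hrep _ ω).2 h), fun i h => h2 i ((hrep _ ω).2 h)⟩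
      · rintro ⟨h1, h2⟩
        exact ⟨fun h => h1 ((hrep _ ω).1 h), fun i h => h2 i ((hrep _ ω).1 h)⟩
    show μ ({ω | X (t + 1) ω = c} ∩ G t) = (N : ENNReal)⁻¹ * μ (G t)
    rw [hGrep]
    exact indep_coord_event μ hmeas hindep hunif t c
      (fun g => (¬ ∀ a ∈ ({c} : Set H), ∃ s, g s = a) ∧
        ∀ i, ¬ ∀ a ∈ (A i : Set H), ∃ s, g s = a)
  have hβ : μ {ω | hitTime X c ω < ⨅ i, collectTime X (A i : Set H) ω}
      = (N : ENNReal)⁻¹ * ∑' t, μ (G t) := by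
    rw [hconull {ω | hitTime X c ω < ⨅ i, collectTime X (A i : Set H) ω}, hDevent,
      ← hconull (⋃ t, D t), measure_iUnion hDdisj hDmeas, tsum_congr hDprob,
      ENNReal.tsum_mul_left]
  have hint : (fun ω => min ((hitTime X c ω : ℕ) : ℝ)
      (⨅ i, ((collectTime X (A i : Set H) ω : ℕ) : ℝ)))
      = fun ω => ((min (hitTime X c ω) (⨅ i, collectTime X (A i : Set H) ω) : ℕ) : ℝ) := by
    funext ω
    rw [Nat.cast_min, cast_iInf_nat hr]
  rw [show (∫ ω, (min (hitTime X c ω) (⨅ i, collectTime X (A i : Set H) ω) : ℝ) ∂μ)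
      = ∫ ω, ((min (hitTime X c ω) (⨅ i, collectTime X (A i : Set H) ω) : ℕ) : ℝ) ∂μ from by
    rw [← hint]]
  have hnn : 0 ≤ᵐ[μ] fun ω =>
      ((min (hitTime X c ω) (⨅ i, collectTime X (A i : Set H) ω) : ℕ) : ℝ) :=
    Filter.Eventually.of_forall fun ω => Nat.cast_nonneg _
  rw [integral_eq_lintegral_of_nonneg_ae hnn
    ((Measurable.of_discrete).comp hTmeas).aestronglyMeasurable]
  simp_rw [ENNReal.ofReal_natCast]
  rw [hlayer, hβ, ENNReal.toReal_mul, ENNReal.toReal_inv, ENNReal.toReal_natCast]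
  have hNR : (N : ℝ) ≠ 0 := Nat.cast_ne_zero.2 hN0
  field_simp
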